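/- Covariance lower bound from exploration algorithms. Fix d ≥ 1, p ∈ (0,1) and n ≥ 1, and set θ_k(p) = ℙ_p[0 ↔ ∂Λ_k] and S_n = ∑_{k=0}^{n−1} θ_k(p). Then ∑_{e ∈ E_n} Cov_p( 1_{0 ↔ ∂Λ_n}, ω_e ) ≥ (n / (8 S_n)) · θ_n(p) · (1 − θ_n(p)), where Cov_p denotes covariance under Bernoulli percolation ℙ_p and ω_e the coordinate map. -/

import Mathlib

open scoped BigOperators Classical

namespace Stmt17

/-- The `i`-th unit vector of `ℤ^d`. -/
def unit (d : ℕ) (i : Fin d) : Fin d → ℤ := fun j => if j = i then 1 else 0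

/-- The box `Λ_n = [-n,n]^d ∩ ℤ^d`. -/
noncomputable def box (d n : ℕ) : Finset (Fin d → ℤ) :=
  Fintype.piFinset fun _ : Fin d => Finset.Icc (-(n : ℤ)) (n : ℤ)

/-- The edge set `E_n` of the box: an edge is encoded by a pair `(x, i)`, joining
`x` and `x + unit i`; both endpoints must lie in the box. -/
noncomputable def boxEdges (d n : ℕ) : Finset ((Fin d → ℤ) × Fin d) :=
  ((box d n) ×ˢ (Finset.univ : Finset (Fin d))).filter fun e => e.1 + unit d e.2 ∈ box d n

/-- Extend a configuration on the box edges by closed edges. -/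
noncomputable def ext (d n : ℕ) (σ : {e // e ∈ boxEdges d n} → Bool) :
    ((Fin d → ℤ) × Fin d) → Bool :=
  fun e => if h : e ∈ boxEdges d n then σ ⟨e, h⟩ else false

/-- Adjacency by an open edge. -/
def adj (d : ℕ) (ω : ((Fin d → ℤ) × Fin d) → Bool) (x y : Fin d → ℤ) : Prop :=
  ∃ i : Fin d, (ω (x, i) = true ∧ y = x + unit d i) ∨ (ω (y, i) = true ∧ x = y + unit d i)

/-- Connectivity by open paths. -/
def conn (d : ℕ) (ω : ((Fin d → ℤ) × Fin d) → Bool) : (Fin d → ℤ) → (Fin d → ℤ) → Prop :=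
  Relation.ReflTransGen (adj d ω)

/-- The inner vertex boundary `∂Λ_k`. -/
noncomputable def bdryBox (d k : ℕ) : Finset (Fin d → ℤ) :=
  (box d k).filter fun x => ∃ i : Fin d, x + unit d i ∉ box d k ∨ x - unit d i ∉ box d k

/-- Bernoulli weight `p^{o(σ)} (1-p)^{c(σ)}` of a configuration on the edges `E_n`. -/
noncomputable def bw (d n : ℕ) (p : ℝ) (σ : {e // e ∈ boxEdges d n} → Bool) : ℝ :=
  p ^ (Finset.univ.filter fun e : {e // e ∈ boxEdges d n} => σ e = true).card *
    (1 - p) ^ (Finset.univ.filter fun e : {e // e ∈ boxEdges d n} => σ e = false).card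

/-- Expectation under the Bernoulli(p) measure on configurations of `E_n`. -/
noncomputable def Ep (d n : ℕ) (p : ℝ) (g : ({e // e ∈ boxEdges d n} → Bool) → ℝ) : ℝ :=
  ∑ σ : {e // e ∈ boxEdges d n} → Bool, g σ * bw d n p σ

/-- Covariance under the Bernoulli(p) measure on configurations of `E_n`. -/
noncomputable def Cov (d n : ℕ) (p : ℝ)
    (g h : ({e // e ∈ boxEdges d n} → Bool) → ℝ) : ℝ :=
  Ep d n p (fun σ => g σ * h σ) - Ep d n p g * Ep d n p h

/-- The indicator of the one-arm event `{0 ↔ ∂Λ_k}`. -/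
noncomputable def oneArmInd (d n k : ℕ) (σ : {e // e ∈ boxEdges d n} → Bool) : ℝ :=
  if ∃ y ∈ bdryBox d k, conn d (ext d n σ) 0 y then 1 else 0

/-- `θ_k(p) = ℙ_p[0 ↔ ∂Λ_k]`. -/
noncomputable def theta (d n k : ℕ) (p : ℝ) : ℝ := Ep d n p (oneArmInd d n k)


noncomputable section OSSSsec

variable {ι : Type*} [Fintype ι] [DecidableEq ι]

def w1 (p : ℝ) (b : Bool) : ℝ := if b then p else 1 - p

@[simp] lemma w1_true (p : ℝ) : w1 p true = p := rfl
@[simp] lemma w1_false (p : ℝ) : w1 p false = 1 - p := rfl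

lemma w1_sum (p : ℝ) : ∑ b : Bool, w1 p b = 1 := by
  simp [w1]

lemma w1_nonneg {p : ℝ} (h0 : 0 ≤ p) (h1 : p ≤ 1) (b : Bool) : 0 ≤ w1 p b := by
  cases b <;> simp [w1] <;> linarith

def W (p : ℝ) (χ : ι → Bool) : ℝ := ∏ f, w1 p (χ f)

lemma W_nonneg {p : ℝ} (h0 : 0 ≤ p) (h1 : p ≤ 1) (χ : ι → Bool) : 0 ≤ W p χ :=
  Finset.prod_nonneg fun f _ => w1_nonneg h0 h1 _

lemma sum_W (p : ℝ) : ∑ χ : ι → Bool, W p χ = 1 := by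
  have h := Finset.prod_univ_sum (fun _ : ι => (Finset.univ : Finset Bool)) (fun _ b => w1 p b)
  rw [Fintype.piFinset_univ] at h
  have h2 : ∏ _i : ι, ∑ b : Bool, w1 p b = 1 := by
    rw [Finset.prod_congr rfl (fun i _ => w1_sum p)]; simp
  rw [← h2, h]; rfl

def E1 (p : ℝ) (g : (ι → Bool) → ℝ) : ℝ := ∑ χ : ι → Bool, g χ * W p χ

lemma E1_const (p : ℝ) (c : ℝ) : E1 p (fun _ : ι → Bool => c) = c := by
  rw [E1, ← Finset.mul_sum, sum_W, mul_one]

lemma E1_add (p : ℝ) (g h : (ι → Bool) → ℝ) :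
    E1 p (fun χ => g χ + h χ) = E1 p g + E1 p h := by
  simp [E1, add_mul, Finset.sum_add_distrib]

lemma E1_smul (p : ℝ) (c : ℝ) (g : (ι → Bool) → ℝ) :
    E1 p (fun χ => c * g χ) = c * E1 p g := by
  simp [E1, Finset.mul_sum, mul_assoc]

lemma E1_mono {p : ℝ} (h0 : 0 ≤ p) (h1 : p ≤ 1) {g h : (ι → Bool) → ℝ}
    (hle : ∀ χ, g χ ≤ h χ) : E1 p g ≤ E1 p h :=
  Finset.sum_le_sum fun χ _ => mul_le_mul_of_nonneg_right (hle χ) (W_nonneg h0 h1 χ)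

lemma E1_nonneg {p : ℝ} (h0 : 0 ≤ p) (h1 : p ≤ 1) {g : (ι → Bool) → ℝ}
    (hg : ∀ χ, 0 ≤ g χ) : 0 ≤ E1 p g := by
  have := E1_mono h0 h1 (g := fun _ => (0:ℝ)) (h := g) (fun χ => hg χ)
  rwa [E1_const] at this

lemma E1_congr (p : ℝ) {g h : (ι → Bool) → ℝ} (he : ∀ χ, g χ = h χ) : E1 p g = E1 p h := by
  simp [E1, he]

/-- splitting a sum over configurations at a coordinate -/
lemma sum_split (e : ι) (F : (ι → Bool) → ℝ) :
    ∑ χ : ι → Bool, F χ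
      = ∑ b : Bool, ∑ r : {j : ι // j ≠ e} → Bool, F ((Equiv.funSplitAt e Bool).symm (b, r)) := by
  rw [← Equiv.sum_comp (Equiv.funSplitAt e Bool).symm F, Fintype.sum_prod_type]

lemma upd_symm_split (e : ι) (b c : Bool) (r : {j : ι // j ≠ e} → Bool) :
    Function.update ((Equiv.funSplitAt e Bool).symm (c, r)) e b
      = (Equiv.funSplitAt e Bool).symm (b, r) := by
  funext j
  rcases eq_or_ne j e with h | h
  · subst h; simp [Equiv.funSplitAt_symm_apply]
  · simp [Function.update, h, Equiv.funSplitAt_symm_apply]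

lemma W_split (p : ℝ) (e : ι) (b : Bool) (r : {j : ι // j ≠ e} → Bool) :
    W p ((Equiv.funSplitAt e Bool).symm (b, r)) = w1 p b * ∏ j : {j : ι // j ≠ e}, w1 p (r j) := by
  rw [W, Fintype.prod_eq_mul_prod_compl e]
  congr 1
  · simp [Equiv.funSplitAt_symm_apply]
  · rw [← Finset.prod_coe_sort]
    apply Fintype.prod_equiv (Equiv.subtypeEquivRight (q := fun j => j ≠ e) (fun x => by simp))
    intro j
    have hj : (j : ι) ≠ e := by
      have h2 := Finset.mem_compl.mp j.2; simpa using h2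
    simp [Equiv.funSplitAt_symm_apply, Equiv.subtypeEquivRight, hj]
    rfl

/-- conditioning on a coordinate -/
lemma condE1 (p : ℝ) (e : ι) (g : (ι → Bool) → ℝ) :
    E1 p g = ∑ b : Bool, w1 p b * E1 p (fun χ => g (Function.update χ e b)) := by
  have key : ∀ b : Bool, E1 p (fun χ => g (Function.update χ e b))
      = ∑ r : {j : ι // j ≠ e} → Bool,
          g ((Equiv.funSplitAt e Bool).symm (b, r)) * ∏ j, w1 p (r j) := by
    intro b
    rw [E1, sum_split e]
    have : ∀ c : Bool, ∀ r, g (Function.update ((Equiv.funSplitAt e Bool).symm (c, r)) e b)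
        * W p ((Equiv.funSplitAt e Bool).symm (c, r))
        = w1 p c * (g ((Equiv.funSplitAt e Bool).symm (b, r)) * ∏ j, w1 p (r j)) := by
      intro c r; rw [upd_symm_split, W_split]; ring
    calc ∑ c : Bool, ∑ r, g (Function.update ((Equiv.funSplitAt e Bool).symm (c, r)) e b)
            * W p ((Equiv.funSplitAt e Bool).symm (c, r))
        = ∑ c : Bool, w1 p c * ∑ r, g ((Equiv.funSplitAt e Bool).symm (b, r)) * ∏ j, w1 p (r j) := by
          apply Finset.sum_congr rfl; intro c _
          rw [Finset.mul_sum]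
          exact Finset.sum_congr rfl fun r _ => this c r
      _ = (∑ c : Bool, w1 p c) * ∑ r, g ((Equiv.funSplitAt e Bool).symm (b, r)) * ∏ j, w1 p (r j) := by
          rw [← Finset.sum_mul]
      _ = _ := by rw [w1_sum, one_mul]
  rw [E1, sum_split e]
  apply Finset.sum_congr rfl
  intro b _
  rw [key b, Finset.mul_sum]
  apply Finset.sum_congr rfl
  intro r _
  rw [W_split]; ring

-- PART2

def E2 (p : ℝ) (G : (ι → Bool) → (ι → Bool) → ℝ) : ℝ := E1 p (fun χ => E1 p (G χ))

lemma E1_sum {β : Type*} (p : ℝ) (s : Finset β) (g : β → (ι → Bool) → ℝ) :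
    E1 p (fun χ => ∑ b ∈ s, g b χ) = ∑ b ∈ s, E1 p (g b) := by
  simp only [E1, Finset.sum_mul]
  exact Finset.sum_comm

lemma E2_congr (p : ℝ) {G H : (ι → Bool) → (ι → Bool) → ℝ}
    (h : ∀ χ ξ, G χ ξ = H χ ξ) : E2 p G = E2 p H := by
  simp only [E2]; exact E1_congr p fun χ => E1_congr p fun ξ => h χ ξ

lemma E2_mono {p : ℝ} (h0 : 0 ≤ p) (h1 : p ≤ 1) {G H : (ι → Bool) → (ι → Bool) → ℝ}
    (h : ∀ χ ξ, G χ ξ ≤ H χ ξ) : E2 p G ≤ E2 p H :=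
  E1_mono h0 h1 fun χ => E1_mono h0 h1 fun ξ => h χ ξ

lemma E2_nonneg {p : ℝ} (h0 : 0 ≤ p) (h1 : p ≤ 1) {G : (ι → Bool) → (ι → Bool) → ℝ}
    (h : ∀ χ ξ, 0 ≤ G χ ξ) : 0 ≤ E2 p G :=
  E1_nonneg h0 h1 fun χ => E1_nonneg h0 h1 fun ξ => h χ ξ

lemma E2_add (p : ℝ) (G H : (ι → Bool) → (ι → Bool) → ℝ) :
    E2 p (fun χ ξ => G χ ξ + H χ ξ) = E2 p G + E2 p H := by
  simp only [E2]
  rw [← E1_add]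
  exact E1_congr p fun χ => E1_add p _ _

/-- decision trees -/
inductive DT (ι : Type*) where
  | leaf : DT ι
  | node (e : ι) (l r : DT ι) : DT ι

namespace DT

def mems : DT ι → Finset ι
  | leaf => ∅
  | node e l r => insert e (mems l ∪ mems r)

def wf : DT ι → Prop
  | leaf => True
  | node e l r => e ∉ mems l ∧ e ∉ mems r ∧ wf l ∧ wf r

def Rev : DT ι → (ι → Bool) → Finset ι
  | leaf, _ => ∅
  | node e l r, χ => insert e (if χ e then Rev r χ else Rev l χ)

@[simp] lemma Rev_leaf (χ : ι → Bool) : (leaf : DT ι).Rev χ = ∅ := rfl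

lemma Rev_node (e : ι) (l r : DT ι) (χ : ι → Bool) :
    (node e l r).Rev χ = insert e ((if χ e then r else l).Rev χ) := by
  cases hb : χ e <;> simp [Rev, hb]

lemma Rev_subset_mems (T : DT ι) (χ : ι → Bool) : T.Rev χ ⊆ T.mems := by
  induction T with
  | leaf => simp [Rev, mems]
  | node e l r ihl ihr =>
    intro g hg
    rw [Rev_node, Finset.mem_insert] at hg
    rw [mems, Finset.mem_insert]
    rcases hg with h | h
    · exact Or.inl h
    · right
      rw [Finset.mem_union]
      cases hb : χ e
      · simp only [hb] at h; exact Or.inl (ihl h)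
      · simp only [hb] at h; exact Or.inr (ihr h)

lemma Rev_update_not_mem (T : DT ι) (e : ι) (he : e ∉ T.mems) (χ : ι → Bool) (b : Bool) :
    T.Rev (Function.update χ e b) = T.Rev χ := by
  induction T with
  | leaf => simp
  | node e' l r ihl ihr =>
    rw [mems, Finset.mem_insert, Finset.mem_union] at he
    push_neg at he
    obtain ⟨hne, hl, hr⟩ := he
    have hup : Function.update χ e b e' = χ e' := Function.update_of_ne (Ne.symm hne) _ _
    rw [Rev_node, Rev_node, hup]
    cases hb : χ e'
    · simp only [hb, Bool.false_eq_true, if_false]; rw [ihl hl]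
    · simp only [hb, if_true]; rw [ihr hr]

def mix (T : DT ι) (χ ξ : ι → Bool) : ι → Bool := fun f => if f ∈ T.Rev χ then ξ f else χ f

lemma mix_leaf (χ ξ : ι → Bool) : mix (leaf : DT ι) χ ξ = χ := by
  funext f; simp [mix]

lemma mix_node_update (e : ι) (l r : DT ι) (hl : e ∉ l.mems) (hr : e ∉ r.mems)
    (b c : Bool) (χ ξ : ι → Bool) :
    mix (node e l r) (Function.update χ e b) (Function.update ξ e c)
      = Function.update (mix (if b then r else l) χ ξ) e c := by
  have hbr : e ∉ (if b then r else l).mems := by cases b <;> simpa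
  have hrev : (node e l r).Rev (Function.update χ e b)
      = insert e ((if b then r else l).Rev χ) := by
    rw [Rev_node, Function.update_self]
    congr 1
    cases b
    · simp only [Bool.false_eq_true, if_false]; exact Rev_update_not_mem l e hl χ false
    · simp only [if_true]; exact Rev_update_not_mem r e hr χ true
  funext f
  rcases eq_or_ne f e with h | h
  · subst h
    simp [mix, hrev]
  · have h1 : f ∈ insert e ((if b then r else l).Rev χ) ↔ f ∈ (if b then r else l).Rev χ := by
      simp [Finset.mem_insert, h]
    simp only [mix, hrev, h1, Function.update_of_ne h]

end DT

/-- revealment probability -/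
def revp (p : ℝ) (e : ι) (T : DT ι) : ℝ :=
  E1 p (fun χ => if e ∈ T.Rev χ then (1:ℝ) else 0)

lemma revp_nonneg {p : ℝ} (h0 : 0 ≤ p) (h1 : p ≤ 1) (e : ι) (T : DT ι) :
    0 ≤ revp p e T :=
  E1_nonneg h0 h1 fun χ => by positivity

/-- resampling influence -/
def Ie (p : ℝ) (e : ι) (f : (ι → Bool) → ℝ) : ℝ :=
  E2 p (fun χ ξ => |f χ - f (Function.update χ e (ξ e))|)

lemma Ie_nonneg {p : ℝ} (h0 : 0 ≤ p) (h1 : p ≤ 1) (e : ι) (f : (ι → Bool) → ℝ) :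
    0 ≤ Ie p e f :=
  E2_nonneg h0 h1 fun χ ξ => abs_nonneg _

/-- double conditioning at a coordinate -/
lemma condE2 (p : ℝ) (e : ι) (G : (ι → Bool) → (ι → Bool) → ℝ) :
    E2 p G = ∑ b : Bool, ∑ c : Bool, w1 p b * w1 p c *
      E2 p (fun χ ξ => G (Function.update χ e b) (Function.update ξ e c)) := by
  rw [E2, condE1 p e]
  apply Finset.sum_congr rfl
  intro b _
  have hin : ∀ χ : ι → Bool, E1 p (G (Function.update χ e b))
      = ∑ c : Bool, w1 p c * E1 p (fun ξ => G (Function.update χ e b) (Function.update ξ e c)) :=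
    fun χ => condE1 p e _
  rw [E1_congr p hin, E1_sum p Finset.univ
      (fun c χ => w1 p c * E1 p (fun ξ => G (Function.update χ e b) (Function.update ξ e c)))]
  rw [Finset.mul_sum]
  apply Finset.sum_congr rfl
  intro c _
  rw [E1_smul]
  rw [← mul_assoc]
  rfl

lemma DT.Rev_node_update (e : ι) (l r : DT ι) (hel : e ∉ l.mems) (her : e ∉ r.mems)
    (b : Bool) (χ : ι → Bool) :
    (DT.node e l r).Rev (Function.update χ e b) = insert e ((if b then r else l).Rev χ) := by
  rw [DT.Rev_node, Function.update_self]
  congr 1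
  cases b
  · simp only [Bool.false_eq_true, if_false]; exact DT.Rev_update_not_mem l e hel χ false
  · simp only [if_true]; exact DT.Rev_update_not_mem r e her χ true

lemma revp_node_self (p : ℝ) (e : ι) (l r : DT ι) : revp p e (DT.node e l r) = 1 := by
  rw [revp]
  have : ∀ χ : ι → Bool, (if e ∈ (DT.node e l r).Rev χ then (1:ℝ) else 0) = 1 := by
    intro χ; rw [if_pos]; rw [DT.Rev_node]; exact Finset.mem_insert_self e _
  rw [E1_congr p this, E1_const]

lemma revp_not_mem (p : ℝ) (e : ι) (T : DT ι) (he : e ∉ T.mems) : revp p e T = 0 := by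
  rw [revp]
  have : ∀ χ : ι → Bool, (if e ∈ T.Rev χ then (1:ℝ) else 0) = 0 := by
    intro χ; rw [if_neg]; exact fun h => he (DT.Rev_subset_mems T χ h)
  rw [E1_congr p this, E1_const]

lemma revp_node_ne (p : ℝ) {e e' : ι} (hne : e' ≠ e) (l r : DT ι)
    (hel : e ∉ l.mems) (her : e ∉ r.mems) :
    revp p e' (DT.node e l r) = ∑ b : Bool, w1 p b * revp p e' (if b then r else l) := by
  rw [revp, condE1 p e]
  apply Finset.sum_congr rfl
  intro b _
  congr 1
  apply E1_congr
  intro χ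
  rw [DT.Rev_node_update e l r hel her b χ]
  simp [Finset.mem_insert, hne]

lemma Ie_cond (p : ℝ) {e e' : ι} (hne : e' ≠ e) (f : (ι → Bool) → ℝ) :
    Ie p e' f = ∑ c : Bool, w1 p c * Ie p e' (fun ζ => f (Function.update ζ e c)) := by
  rw [Ie, E2, condE1 p e]
  apply Finset.sum_congr rfl
  intro c _
  congr 1
  apply E1_congr
  intro χ
  apply E1_congr
  intro ξ
  rw [Function.update_comm hne.symm]

lemma decouple (p : ℝ) (T : DT ι) (hwf : T.wf)
    (F : (ι → Bool) → (ι → Bool) → ℝ)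
    (hF : ∀ χ χ', (∀ g ∈ T.Rev χ, χ' g = χ g) → F χ = F χ') :
    E2 p (fun χ ξ => F χ (DT.mix T χ ξ)) = E2 p F := by
  induction T generalizing F with
  | leaf =>
    have hc : ∀ χ, F χ = F (fun _ => false) := by
      intro χ
      exact hF χ (fun _ => false) (by simp)
    have h1 : E2 p (fun χ ξ => F χ (DT.mix DT.leaf χ ξ)) = E1 p (fun χ => F (fun _ => false) χ) := by
      rw [E2]
      apply E1_congr
      intro χ
      simp only [DT.mix_leaf]
      have : ∀ ξ : ι → Bool, F χ χ = F (fun _ => false) χ := fun _ => by rw [hc χ]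
      rw [E1_congr p this, E1_const]
    have h2 : E2 p F = E1 p (F (fun _ => false)) := by
      rw [E2]
      have : ∀ χ, E1 p (F χ) = E1 p (F (fun _ => false)) := by
        intro χ; rw [hc χ]
      rw [E1_congr p this, E1_const]
    rw [h1, h2]
  | node e l r ihl ihr =>
    obtain ⟨hel, her, hwl, hwr⟩ : e ∉ l.mems ∧ e ∉ r.mems ∧ l.wf ∧ r.wf := hwf
    rw [condE2 p e (fun χ ξ => F χ (DT.mix (DT.node e l r) χ ξ)), condE2 p e F]
    apply Finset.sum_congr rfl; intro b _
    apply Finset.sum_congr rfl; intro c _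
    congr 1
    have hmix : ∀ χ ξ : ι → Bool,
        DT.mix (DT.node e l r) (Function.update χ e b) (Function.update ξ e c)
          = Function.update (DT.mix (if b then r else l) χ ξ) e c :=
      fun χ ξ => DT.mix_node_update e l r hel her b c χ ξ
    have hpt : ∀ χ ξ : ι → Bool,
        F (Function.update χ e b) (DT.mix (DT.node e l r) (Function.update χ e b) (Function.update ξ e c))
          = F (Function.update χ e b) (Function.update (DT.mix (if b then r else l) χ ξ) e c) := by
      intro χ ξ; rw [hmix]
    rw [E2_congr p hpt]
    -- the measurability transfer
    have hF' : ∀ χ χ' : ι → Bool, (∀ g ∈ (if b then r else l).Rev χ, χ' g = χ g) →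
        F (Function.update χ e b) = F (Function.update χ' e b) := by
      intro χ χ' hag
      apply hF
      intro g hg
      rw [DT.Rev_node_update e l r hel her b χ] at hg
      rcases Finset.mem_insert.mp hg with h | h
      · subst h; simp
      · have hgne : g ≠ e := by
          intro hgeq; subst hgeq
          cases b
          · simp only [Bool.false_eq_true, if_false] at h; exact hel (DT.Rev_subset_mems l χ h)
          · simp only [if_true] at h; exact her (DT.Rev_subset_mems r χ h)
        rw [Function.update_of_ne hgne, Function.update_of_ne hgne]
        exact hag g h
    cases b
    · simp only [Bool.false_eq_true, if_false] at hF' ⊢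
      exact ihl hwl (fun χ ζ => F (Function.update χ e false) (Function.update ζ e c))
        (fun χ χ' hag => by
          funext ζ
          show F (Function.update χ e false) (Function.update ζ e c)
              = F (Function.update χ' e false) (Function.update ζ e c)
          rw [hF' χ χ' hag])
    · simp only [if_true] at hF' ⊢
      exact ihr hwr (fun χ ζ => F (Function.update χ e true) (Function.update ζ e c))
        (fun χ χ' hag => by
          funext ζ
          show F (Function.update χ e true) (Function.update ζ e c)
              = F (Function.update χ' e true) (Function.update ζ e c)
          rw [hF' χ χ' hag])

lemma osss_mix {p : ℝ} (h0 : 0 ≤ p) (h1 : p ≤ 1) (T : DT ι) (hwf : T.wf)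
    (f : (ι → Bool) → ℝ) :
    E2 p (fun χ ξ => |f χ - f (DT.mix T χ ξ)|) ≤ ∑ e : ι, revp p e T * Ie p e f := by
  induction T generalizing f with
  | leaf =>
    have h1' : E2 p (fun χ ξ => |f χ - f (DT.mix DT.leaf χ ξ)|) = 0 := by
      have : ∀ χ ξ : ι → Bool, |f χ - f (DT.mix DT.leaf χ ξ)| = 0 := by
        intro χ ξ; rw [DT.mix_leaf]; simp
      rw [E2_congr p this]
      rw [show (fun (χ ξ : ι → Bool) => (0:ℝ)) = fun (χ : ι → Bool) => (fun (ξ : ι → Bool) => (0:ℝ)) from rfl, E2]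
      rw [E1_congr p (fun χ => E1_const p 0), E1_const]
    rw [h1']
    apply Finset.sum_nonneg
    intro e _
    exact mul_nonneg (revp_nonneg h0 h1 e _) (Ie_nonneg h0 h1 e f)
  | node e l r ihl ihr =>
    obtain ⟨hel, her, hwl, hwr⟩ : e ∉ l.mems ∧ e ∉ r.mems ∧ l.wf ∧ r.wf := hwf
    -- triangle inequality
    have tri : E2 p (fun χ ξ => |f χ - f (DT.mix (DT.node e l r) χ ξ)|)
        ≤ Ie p e f + E2 p (fun χ ξ =>
            |f (Function.update χ e (ξ e)) - f (DT.mix (DT.node e l r) χ ξ)|) := by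
      rw [Ie, ← E2_add]
      apply E2_mono h0 h1
      intro χ ξ
      exact abs_sub_le _ _ _
    set Term2 := E2 p (fun χ ξ =>
        |f (Function.update χ e (ξ e)) - f (DT.mix (DT.node e l r) χ ξ)|) with hT2
    -- bound Term2
    have step2 : Term2 ≤ ∑ b : Bool, ∑ c : Bool, w1 p b * w1 p c *
        (∑ e' : ι, revp p e' (if b then r else l) * Ie p e' (fun ζ => f (Function.update ζ e c))) := by
      rw [hT2, condE2 p e]
      apply Finset.sum_le_sum
      intro b _
      apply Finset.sum_le_sum
      intro c _
      apply mul_le_mul_of_nonneg_left _ (mul_nonneg (w1_nonneg h0 h1 b) (w1_nonneg h0 h1 c))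
      have hpt : ∀ χ ξ : ι → Bool,
          |f (Function.update (Function.update χ e b) e ((Function.update ξ e c) e))
             - f (DT.mix (DT.node e l r) (Function.update χ e b) (Function.update ξ e c))|
          = |(fun ζ => f (Function.update ζ e c)) χ
             - (fun ζ => f (Function.update ζ e c)) (DT.mix (if b then r else l) χ ξ)| := by
        intro χ ξ
        rw [DT.mix_node_update e l r hel her b c χ ξ]
        simp only [Function.update_self, Function.update_idem]
      rw [E2_congr p hpt]
      cases b
      · simp only [Bool.false_eq_true, if_false]
        exact ihl hwl (fun ζ => f (Function.update ζ e c))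
      · simp only [if_true]
        exact ihr hwr (fun ζ => f (Function.update ζ e c))
    -- identify the RHS
    have key : ∀ e' : ι, e' ≠ e →
        revp p e' (DT.node e l r) * Ie p e' f
          = ∑ b : Bool, ∑ c : Bool, w1 p b * w1 p c *
              (revp p e' (if b then r else l) * Ie p e' (fun ζ => f (Function.update ζ e c))) := by
      intro e' hne
      rw [revp_node_ne p hne l r hel her, Ie_cond p hne f, Finset.sum_mul_sum]
      apply Finset.sum_congr rfl; intro b _
      apply Finset.sum_congr rfl; intro c _
      ring
    have zero : ∀ b : Bool, revp p e (if b then r else l) = 0 := by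
      intro b
      cases b
      · simp only [Bool.false_eq_true, if_false]; exact revp_not_mem p e l hel
      · simp only [if_true]; exact revp_not_mem p e r her
    -- rearrange double sums
    have rearr : ∑ b : Bool, ∑ c : Bool, w1 p b * w1 p c *
        (∑ e' : ι, revp p e' (if b then r else l) * Ie p e' (fun ζ => f (Function.update ζ e c)))
        = ∑ e' ∈ Finset.univ.erase e, revp p e' (DT.node e l r) * Ie p e' f := by
      have swap1 : ∀ b : Bool, ∀ c : Bool,
          w1 p b * w1 p c * (∑ e' : ι, revp p e' (if b then r else l)
              * Ie p e' (fun ζ => f (Function.update ζ e c)))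
          = ∑ e' ∈ Finset.univ.erase e, w1 p b * w1 p c * (revp p e' (if b then r else l)
              * Ie p e' (fun ζ => f (Function.update ζ e c))) := by
        intro b c
        rw [Finset.mul_sum]
        symm
        apply Finset.sum_erase
        rw [zero b, zero_mul, mul_zero]
      calc ∑ b : Bool, ∑ c : Bool, w1 p b * w1 p c *
              (∑ e' : ι, revp p e' (if b then r else l) * Ie p e' (fun ζ => f (Function.update ζ e c)))
          = ∑ b : Bool, ∑ c : Bool, ∑ e' ∈ Finset.univ.erase e,
              w1 p b * w1 p c * (revp p e' (if b then r else l)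
                * Ie p e' (fun ζ => f (Function.update ζ e c))) := by
            apply Finset.sum_congr rfl; intro b _
            apply Finset.sum_congr rfl; intro c _
            exact swap1 b c
        _ = ∑ b : Bool, ∑ e' ∈ Finset.univ.erase e, ∑ c : Bool,
              w1 p b * w1 p c * (revp p e' (if b then r else l)
                * Ie p e' (fun ζ => f (Function.update ζ e c))) := by
            apply Finset.sum_congr rfl; intro b _
            rw [Finset.sum_comm]
        _ = ∑ e' ∈ Finset.univ.erase e, ∑ b : Bool, ∑ c : Bool,
              w1 p b * w1 p c * (revp p e' (if b then r else l)
                * Ie p e' (fun ζ => f (Function.update ζ e c))) := by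
            rw [Finset.sum_comm]
        _ = ∑ e' ∈ Finset.univ.erase e, revp p e' (DT.node e l r) * Ie p e' f := by
            apply Finset.sum_congr rfl; intro e' he'
            exact (key e' (Finset.mem_erase.mp he').1).symm
    -- put it together
    have final : ∑ e' : ι, revp p e' (DT.node e l r) * Ie p e' f
        = Ie p e f + ∑ e' ∈ Finset.univ.erase e, revp p e' (DT.node e l r) * Ie p e' f := by
      rw [← Finset.add_sum_erase _ _ (Finset.mem_univ e), revp_node_self, one_mul]
    rw [final]
    calc E2 p (fun χ ξ => |f χ - f (DT.mix (DT.node e l r) χ ξ)|)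
        ≤ Ie p e f + Term2 := tri
      _ ≤ Ie p e f + ∑ e' ∈ Finset.univ.erase e, revp p e' (DT.node e l r) * Ie p e' f := by
          have := step2.trans_eq rearr
          linarith

lemma E2_left (p : ℝ) (g : (ι → Bool) → ℝ) : E2 p (fun χ _ξ => g χ) = E1 p g := by
  rw [E2]
  exact E1_congr p fun χ => E1_const p (g χ)

lemma E1_sub (p : ℝ) (g h : (ι → Bool) → ℝ) :
    E1 p (fun χ => g χ - h χ) = E1 p g - E1 p h := by
  simp [E1, sub_mul, Finset.sum_sub_distrib]

/-- abstract covariance with a coordinate -/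
def CovA (p : ℝ) (e : ι) (f : (ι → Bool) → ℝ) : ℝ :=
  E1 p (fun χ => f χ * (if χ e then 1 else 0))
    - E1 p f * E1 p (fun χ => if χ e then (1:ℝ) else 0)

lemma E1_coord (p : ℝ) (e : ι) : E1 p (fun χ : ι → Bool => if χ e then (1:ℝ) else 0) = p := by
  rw [condE1 p e]
  simp [Fintype.sum_bool, w1, E1_const]

lemma CovA_eq (p : ℝ) (e : ι) (f : (ι → Bool) → ℝ) :
    CovA p e f = p * (1 - p) *
      (E1 p (fun χ => f (Function.update χ e true)) - E1 p (fun χ => f (Function.update χ e false))) := by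
  have ht : ∀ χ : ι → Bool, f (Function.update χ e true) * (if (Function.update χ e true) e then (1:ℝ) else 0) = f (Function.update χ e true) := by
    intro χ; simp
  have hfz : ∀ χ : ι → Bool, f (Function.update χ e false) * (if (Function.update χ e false) e then (1:ℝ) else 0) = 0 := by
    intro χ; simp
  have h1 : E1 p (fun χ => f χ * (if χ e then 1 else 0))
      = p * E1 p (fun χ => f (Function.update χ e true)) := by
    rw [condE1 p e (fun χ => f χ * (if χ e then 1 else 0)), Fintype.sum_bool]
    rw [E1_congr p ht, E1_congr p hfz, E1_const]
    simp
  have h2 : E1 p f = p * E1 p (fun χ => f (Function.update χ e true))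
      + (1 - p) * E1 p (fun χ => f (Function.update χ e false)) := by
    rw [condE1 p e f, Fintype.sum_bool]
    simp
  rw [CovA, h1, h2, E1_coord]
  ring

lemma Ie_eq_two_cov {p : ℝ} (e : ι) (f : (ι → Bool) → ℝ)
    (hmono : ∀ χ, f (Function.update χ e false) ≤ f (Function.update χ e true)) :
    Ie p e f = 2 * CovA p e f := by
  have habs_tf : ∀ χ : ι → Bool, |f (Function.update χ e true) - f (Function.update χ e false)|
      = f (Function.update χ e true) - f (Function.update χ e false) := fun χ =>
    abs_of_nonneg (sub_nonneg.mpr (hmono χ))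
  have habs_ft : ∀ χ : ι → Bool, |f (Function.update χ e false) - f (Function.update χ e true)|
      = f (Function.update χ e true) - f (Function.update χ e false) := fun χ => by
    rw [abs_sub_comm]; exact habs_tf χ
  have habs_d : ∀ (b : Bool) (χ : ι → Bool), |f (Function.update χ e b) - f (Function.update χ e b)| = (0:ℝ) := by
    intro b χ; simp
  have hIe : Ie p e f = ∑ b : Bool, ∑ c : Bool, w1 p b * w1 p c *
      E1 p (fun χ => |f (Function.update χ e b) - f (Function.update χ e c)|) := by
    rw [Ie, condE2 p e]
    apply Finset.sum_congr rfl; intro b _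
    apply Finset.sum_congr rfl; intro c _
    congr 1
    have hpt : ∀ χ ξ : ι → Bool,
        |f (Function.update χ e b) - f (Function.update (Function.update χ e b) e ((Function.update ξ e c) e))|
          = |f (Function.update χ e b) - f (Function.update χ e c)| := by
      intro χ ξ
      rw [Function.update_self, Function.update_idem]
    rw [E2_congr p hpt, E2_left]
  rw [hIe]
  simp only [Fintype.sum_bool]
  rw [E1_congr p habs_tf, E1_congr p habs_ft, E1_congr p (habs_d true), E1_congr p (habs_d false)]
  rw [E1_const, E1_sub, CovA_eq]
  simp only [w1_true, w1_false]
  ring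

/-- endpoint identity: for Boolean `f` determined by a wf tree -/
lemma endpoint (p : ℝ) (T : DT ι) (hwf : T.wf) (f : (ι → Bool) → ℝ)
    (hf01 : ∀ χ, f χ = 0 ∨ f χ = 1)
    (hdet : ∀ χ χ', (∀ g ∈ T.Rev χ, χ' g = χ g) → f χ' = f χ) :
    E2 p (fun χ ξ => |f χ - f (DT.mix T χ ξ)|) = 2 * (E1 p f * (1 - E1 p f)) := by
  have hdec := decouple p T hwf (fun χ ζ => |f χ - f ζ|)
    (fun χ χ' hag => by
      funext ζ
      show |f χ - f ζ| = |f χ' - f ζ|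
      rw [hdet χ χ' hag])
  rw [hdec]
  have hpt : ∀ χ ξ : ι → Bool, |f χ - f ξ| = f χ + f ξ - 2 * (f χ * f ξ) := by
    intro χ ξ
    rcases hf01 χ with h | h <;> rcases hf01 ξ with h' | h' <;> rw [h, h'] <;> norm_num
  rw [E2_congr p hpt]
  have e1 : E2 p (fun χ ξ => f χ + f ξ - 2 * (f χ * f ξ))
      = E1 p f + E1 p f - 2 * (E1 p f * E1 p f) := by
    rw [E2]
    have hin : ∀ χ, E1 p (fun ξ => f χ + f ξ - 2 * (f χ * f ξ))
        = f χ + E1 p f - 2 * (f χ * E1 p f) := by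
      intro χ
      have : ∀ ξ, f χ + f ξ - 2 * (f χ * f ξ) = f χ + f ξ + (-2 * f χ) * f ξ := by
        intro ξ; ring
      rw [E1_congr p this]
      rw [show (fun ξ => f χ + f ξ + (-2 * f χ) * f ξ) = fun ξ => (f χ + f ξ) + ((-2 * f χ) * f ξ) from rfl]
      rw [E1_add, E1_add, E1_const, E1_smul]
      ring
    rw [E1_congr p hin]
    rw [show (fun χ => f χ + E1 p f - 2 * (f χ * E1 p f)) = fun χ => (f χ + E1 p f) + (-2 * E1 p f) * f χ from by funext χ; ring]
    rw [E1_add, E1_add, E1_const, E1_smul]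
    ring
  rw [e1]
  ring

/-- abstract OSSS conclusion -/
theorem osss_main {p : ℝ} (h0 : 0 ≤ p) (h1 : p ≤ 1) (T : DT ι) (hwf : T.wf)
    (f : (ι → Bool) → ℝ)
    (hf01 : ∀ χ, f χ = 0 ∨ f χ = 1)
    (hdet : ∀ χ χ', (∀ g ∈ T.Rev χ, χ' g = χ g) → f χ' = f χ)
    (hmono : ∀ e : ι, ∀ χ, f (Function.update χ e false) ≤ f (Function.update χ e true)) :
    E1 p f * (1 - E1 p f) ≤ ∑ e : ι, revp p e T * CovA p e f := by
  have h := osss_mix h0 h1 T hwf f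
  rw [endpoint p T hwf f hf01 hdet] at h
  have hsum : ∑ e : ι, revp p e T * Ie p e f = 2 * ∑ e : ι, revp p e T * CovA p e f := by
    rw [Finset.mul_sum]
    apply Finset.sum_congr rfl; intro e _
    rw [Ie_eq_two_cov e f (hmono e)]
    ring
  rw [hsum] at h
  linarith

/-- a generic decision-tree fact: the run is stable under changing unrevealed bits -/
lemma DT.Rev_agree (T : DT ι) (χ χ' : ι → Bool)
    (h : ∀ g ∈ T.Rev χ, χ' g = χ g) : T.Rev χ' = T.Rev χ := by
  induction T with
  | leaf => simp
  | node e l r ihl ihr =>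
    have he : χ' e = χ e := h e (by rw [DT.Rev_node]; exact Finset.mem_insert_self _ _)
    rw [DT.Rev_node, DT.Rev_node, he]
    congr 1
    cases hb : χ e with
    | false =>
      simp only [Bool.false_eq_true, if_false]
      apply ihl
      intro g hg
      apply h
      rw [DT.Rev_node, hb]
      simp only [Bool.false_eq_true, if_false]
      exact Finset.mem_insert_of_mem hg
    | true =>
      simp only [if_true]
      apply ihr
      intro g hg
      apply h
      rw [DT.Rev_node, hb]
      simp only [if_true]
      exact Finset.mem_insert_of_mem hg


lemma E1_perm (p : ℝ) (π : Equiv.Perm ι) (g : (ι → Bool) → ℝ) :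
    E1 p (fun χ => g (fun x => χ (π x))) = E1 p g := by
  let Eq2 : (ι → Bool) ≃ (ι → Bool) := Equiv.arrowCongr π.symm (Equiv.refl Bool)
  have hEq2 : ∀ χ : ι → Bool, Eq2 χ = fun x => χ (π x) := fun χ => rfl
  have hW : ∀ χ : ι → Bool, W p (fun x => χ (π x)) = W p χ := by
    intro χ
    exact Equiv.prod_comp π (fun x => w1 p (χ x))
  calc E1 p (fun χ => g (fun x => χ (π x)))
      = ∑ χ : ι → Bool, g (Eq2 χ) * W p (Eq2 χ) := by
        rw [E1]
        apply Finset.sum_congr rfl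
        intro χ _
        rw [hEq2 χ, hW χ]
    _ = ∑ τ : ι → Bool, g τ * W p τ := Equiv.sum_comp Eq2 (fun τ => g τ * W p τ)
    _ = E1 p g := rfl

end OSSSsec

/-! ## Geometry: sup norm, boxes, boundaries -/

def nrm {d : ℕ} (x : Fin d → ℤ) : ℕ := Finset.univ.sup fun i => (x i).natAbs

lemma mem_box_iff {d m : ℕ} {x : Fin d → ℤ} : x ∈ box d m ↔ ∀ i, (x i).natAbs ≤ m := by
  rw [box, Fintype.mem_piFinset]
  apply forall_congr'
  intro i
  rw [Finset.mem_Icc]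
  omega

lemma mem_box_iff_nrm {d m : ℕ} {x : Fin d → ℤ} : x ∈ box d m ↔ nrm x ≤ m := by
  rw [mem_box_iff, nrm, Finset.sup_le_iff]
  simp

lemma unit_apply {d : ℕ} (i j : Fin d) : unit d i j = if j = i then 1 else 0 := rfl

lemma add_unit_apply {d : ℕ} (x : Fin d → ℤ) (i j : Fin d) :
    (x + unit d i) j = x j + if j = i then 1 else 0 := rfl

lemma sub_unit_apply {d : ℕ} (x : Fin d → ℤ) (i j : Fin d) :
    (x - unit d i) j = x j - if j = i then 1 else 0 := rfl

lemma nrm_le_iff {d m : ℕ} {x : Fin d → ℤ} : nrm x ≤ m ↔ ∀ i, (x i).natAbs ≤ m := by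
  rw [nrm, Finset.sup_le_iff]; simp

lemma le_nrm {d : ℕ} (x : Fin d → ℤ) (i : Fin d) : (x i).natAbs ≤ nrm x := by
  show (x i).natAbs ≤ Finset.univ.sup fun j => (x j).natAbs
  exact Finset.le_sup (f := fun j => (x j).natAbs) (Finset.mem_univ i)

lemma mem_bdry_iff {d m : ℕ} (hd : 1 ≤ d) {x : Fin d → ℤ} :
    x ∈ bdryBox d m ↔ nrm x = m := by
  rw [bdryBox, Finset.mem_filter]
  constructor
  · rintro ⟨hbox, i, hi⟩
    have hx : ∀ j, (x j).natAbs ≤ m := mem_box_iff.mp hbox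
    have : (x i).natAbs = m := by
      rcases hi with h | h
      · have hnot : ¬ ∀ j, ((x + unit d i) j).natAbs ≤ m := fun hc => h (mem_box_iff.mpr hc)
        push_neg at hnot
        obtain ⟨j, hj⟩ := hnot
        rcases eq_or_ne j i with rfl | hne
        · rw [add_unit_apply, if_pos rfl] at hj
          have := hx j; omega
        · rw [add_unit_apply, if_neg hne, add_zero] at hj
          exact absurd (hx j) (by omega)
      · have hnot : ¬ ∀ j, ((x - unit d i) j).natAbs ≤ m := fun hc => h (mem_box_iff.mpr hc)
        push_neg at hnot
        obtain ⟨j, hj⟩ := hnot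
        rcases eq_or_ne j i with rfl | hne
        · rw [sub_unit_apply, if_pos rfl] at hj
          have := hx j; omega
        · rw [sub_unit_apply, if_neg hne, sub_zero] at hj
          exact absurd (hx j) (by omega)
    have h1 : nrm x ≤ m := mem_box_iff_nrm.mp hbox
    have h2 : m ≤ nrm x := this ▸ le_nrm x i
    omega
  · intro hnx
    have hne : (Finset.univ : Finset (Fin d)).Nonempty := by
      rw [Finset.univ_nonempty_iff]
      exact Fin.pos_iff_nonempty.mp hd
    obtain ⟨i, _, hi⟩ := Finset.exists_mem_eq_sup Finset.univ hne (fun i => (x i).natAbs)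
    rw [nrm] at hnx
    refine ⟨mem_box_iff_nrm.mpr (le_of_eq hnx), i, ?_⟩
    have him : (x i).natAbs = m := by omega
    rcases (by omega : x i = (m:ℤ) ∨ x i = -(m:ℤ)) with h | h
    · left
      intro hc
      have := (mem_box_iff.mp hc) i
      rw [add_unit_apply, if_pos rfl, h] at this
      omega
    · right
      intro hc
      have := (mem_box_iff.mp hc) i
      rw [sub_unit_apply, if_pos rfl, h] at this
      omega

lemma nrm_sub_triangle {d : ℕ} (x y z : Fin d → ℤ) : nrm (x - z) ≤ nrm (x - y) + nrm (y - z) := by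
  rw [nrm_le_iff]
  intro i
  have h1 := le_nrm (x - y) i
  have h2 := le_nrm (y - z) i
  have hx : (x - z) i = (x - y) i + (y - z) i := by simp
  rw [hx]
  omega

lemma nrm_diff_ge {d : ℕ} (x y : Fin d → ℤ) : nrm x ≤ nrm y + nrm (x - y) := by
  rw [nrm_le_iff]
  intro i
  have h1 := le_nrm y i
  have h2 := le_nrm (x - y) i
  have hx : x i = y i + (x - y) i := by simp
  rw [hx]
  omega

/-- one adjacency step changes the distance-to-`z` sup norm by at most 1 -/
lemma adj_nrm_step {d n' : ℕ} (ω : ((Fin d → ℤ) × Fin d) → Bool) {v w : Fin d → ℤ}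
    (h : adj d ω v w) (z : Fin d → ℤ) :
    nrm (w - z) ≤ nrm (v - z) + 1 ∧ nrm (v - z) ≤ nrm (w - z) + 1 := by
  obtain ⟨i, h | h⟩ := h
  · have hw : w - z = v - z + unit d i := by rw [h.2]; funext j; simp [unit]; ring
    constructor
    · rw [nrm_le_iff]; intro j
      have := le_nrm (v - z) j
      rw [hw, add_unit_apply]
      split <;> omega
    · rw [nrm_le_iff]; intro j
      have : ((v - z + unit d i) j).natAbs ≤ nrm (w - z) := hw ▸ le_nrm (w - z) j
      rw [add_unit_apply] at this
      revert this; split <;> omega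
  · have hv : v - z = w - z + unit d i := by rw [h.2]; funext j; simp [unit]; ring
    constructor
    · rw [nrm_le_iff]; intro j
      have : ((w - z + unit d i) j).natAbs ≤ nrm (v - z) := hv ▸ le_nrm (v - z) j
      rw [add_unit_apply] at this
      revert this; split <;> omega
    · rw [nrm_le_iff]; intro j
      have := le_nrm (w - z) j
      rw [hv, add_unit_apply]
      split <;> omega

/-- discrete intermediate value theorem along a path -/
lemma rtg_ivt {α : Type*} (r : α → α → Prop) (ψ : α → ℕ)
    (hstep : ∀ v w, r v w → ψ w ≤ ψ v + 1) {a b : α}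
    (h : Relation.ReflTransGen r a b) (m : ℕ) (ha : ψ a ≤ m) (hb : m ≤ ψ b) :
    ∃ v, ψ v = m ∧ Relation.ReflTransGen r a v := by
  induction h with
  | refl => exact ⟨a, le_antisymm (by omega) (by omega), Relation.ReflTransGen.refl⟩
  | @tail c b' h' step ih =>
    rcases le_or_gt m (ψ c) with hc | hc
    · exact ih hc
    · have := hstep c b' step
      exact ⟨b', by omega, h'.tail step⟩

/-- first exit of a ball, staying inside -/
lemma rtg_first_exit {α : Type*} (r : α → α → Prop) (ψ : α → ℕ)
    (hstep : ∀ v w, r v w → ψ w ≤ ψ v + 1) (J : ℕ) {a b : α}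
    (h : Relation.ReflTransGen r a b) (ha : ψ a ≤ J) (hb : J ≤ ψ b) :
    ∃ v, ψ v = J ∧ Relation.ReflTransGen (fun x y => r x y ∧ ψ x ≤ J ∧ ψ y ≤ J) a v := by
  have main : (∃ v, ψ v = J ∧ Relation.ReflTransGen (fun x y => r x y ∧ ψ x ≤ J ∧ ψ y ≤ J) a v)
      ∨ (Relation.ReflTransGen (fun x y => r x y ∧ ψ x ≤ J ∧ ψ y ≤ J) a b ∧ ψ b ≤ J) := by
    clear hb
    induction h with
    | refl => exact Or.inr ⟨Relation.ReflTransGen.refl, ha⟩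
    | @tail c b' h' step ih =>
      rcases ih with h1 | ⟨hpath, hc⟩
      · exact Or.inl h1
      · rcases eq_or_lt_of_le hc with heq | hlt
        · exact Or.inl ⟨c, heq, hpath⟩
        · have hb' : ψ b' ≤ J := by have := hstep c b' step; omega
          exact Or.inr ⟨hpath.tail ⟨step, hc, hb'⟩, hb'⟩
  rcases main with h1 | ⟨hpath, hble⟩
  · exact h1
  · exact ⟨b, by omega, hpath⟩


/-! ## The exploration algorithm -/

abbrev EdgeT (d n : ℕ) := {e // e ∈ boxEdges d n}

def ep1 {d n : ℕ} (g : EdgeT d n) : Fin d → ℤ := g.1.1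
def ep2 {d n : ℕ} (g : EdgeT d n) : Fin d → ℤ := g.1.1 + unit d g.1.2

def touches {d n : ℕ} (C : Finset (Fin d → ℤ)) (g : EdgeT d n) : Prop :=
  ep1 g ∈ C ∨ ep2 g ∈ C

noncomputable def explore (d n : ℕ) (U : Finset (EdgeT d n)) (C : Finset (Fin d → ℤ)) :
    DT (EdgeT d n) :=
  if h : (U.filter (fun g => touches C g)).Nonempty then
    DT.node h.choose (explore d n (U.erase h.choose) C)
      (explore d n (U.erase h.choose) (insert (ep1 h.choose) (insert (ep2 h.choose) C)))
  else DT.leaf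
termination_by U.card
decreasing_by
  all_goals
    exact Finset.card_erase_lt_of_mem (Finset.mem_of_mem_filter _ h.choose_spec)

lemma explore_mems (d n : ℕ) (U : Finset (EdgeT d n)) (C : Finset (Fin d → ℤ)) :
    (explore d n U C).mems ⊆ U := by
  induction U using Finset.strongInduction generalizing C with
  | _ U ih =>
    rw [explore]
    by_cases h : (U.filter (fun g => touches C g)).Nonempty
    · rw [dif_pos h]
      have hgU : h.choose ∈ U := Finset.mem_of_mem_filter _ h.choose_spec
      have hsub := Finset.erase_ssubset hgU
      intro g hg
      rw [DT.mems, Finset.mem_insert] at hg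
      rcases hg with rfl | hg
      · exact hgU
      · rcases Finset.mem_union.mp hg with hg | hg
        · exact Finset.mem_of_mem_erase (ih _ hsub _ hg)
        · exact Finset.mem_of_mem_erase (ih _ hsub _ hg)
    · rw [dif_neg h]
      intro g hg
      simp [DT.mems] at hg

lemma explore_wf (d n : ℕ) (U : Finset (EdgeT d n)) (C : Finset (Fin d → ℤ)) :
    (explore d n U C).wf := by
  induction U using Finset.strongInduction generalizing C with
  | _ U ih =>
    rw [explore]
    by_cases h : (U.filter (fun g => touches C g)).Nonempty
    · rw [dif_pos h]
      have hgU : h.choose ∈ U := Finset.mem_of_mem_filter _ h.choose_spec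
      have hsub := Finset.erase_ssubset hgU
      refine ⟨fun hc => ?_, fun hc => ?_, ih _ hsub _, ih _ hsub _⟩
      · exact Finset.notMem_erase _ _ (explore_mems d n _ _ hc)
      · exact Finset.notMem_erase _ _ (explore_mems d n _ _ hc)
    · rw [dif_neg h]
      trivial

lemma edge_adj {d n : ℕ} (χ : EdgeT d n → Bool) (g : EdgeT d n) (hg : χ g = true) :
    adj d (ext d n χ) (ep1 g) (ep2 g) := by
  refine ⟨g.1.2, Or.inl ⟨?_, rfl⟩⟩
  have : (ep1 g, g.1.2) = g.1 := by
    rw [ep1]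
  rw [this, ext, dif_pos g.2]
  convert hg

/-- anything revealed by `explore` has an endpoint connected to the seed set -/
lemma explore_rev_conn (d n : ℕ) (U : Finset (EdgeT d n)) (C : Finset (Fin d → ℤ))
    (χ : EdgeT d n → Bool) (g : EdgeT d n) (hg : g ∈ (explore d n U C).Rev χ) :
    ∃ v, (v = ep1 g ∨ v = ep2 g) ∧ ∃ c ∈ C, Relation.ReflTransGen (adj d (ext d n χ)) c v := by
  induction U using Finset.strongInduction generalizing C with
  | _ U ih =>
    rw [explore] at hg
    by_cases h : (U.filter (fun g => touches C g)).Nonempty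
    · rw [dif_pos h] at hg
      have htch : touches C h.choose := (Finset.mem_filter.mp h.choose_spec).2
      have hgU : h.choose ∈ U := Finset.mem_of_mem_filter _ h.choose_spec
      have hsub := Finset.erase_ssubset hgU
      rw [DT.Rev_node, Finset.mem_insert] at hg
      rcases hg with rfl | hg
      · rcases htch with hv | hv
        · exact ⟨ep1 h.choose, Or.inl rfl, ep1 h.choose, hv, Relation.ReflTransGen.refl⟩
        · exact ⟨ep2 h.choose, Or.inr rfl, ep2 h.choose, hv, Relation.ReflTransGen.refl⟩
      · cases hb : χ h.choose with
        | false =>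
          rw [hb] at hg
          simp only [Bool.false_eq_true, if_false] at hg
          exact ih _ hsub _ hg
        | true =>
          rw [hb] at hg
          simp only [if_true] at hg
          obtain ⟨v, hv, c', hc', hpath⟩ := ih _ hsub _ hg
          -- c' is in the enlarged seed set
          have hstep : ∀ c'' , c'' = ep1 h.choose ∨ c'' = ep2 h.choose →
              ∃ c ∈ C, Relation.ReflTransGen (adj d (ext d n χ)) c c'' := by
            intro c'' hc''
            have hadj := edge_adj χ h.choose hb
            rcases htch with hw | hw
            · refine ⟨ep1 h.choose, hw, ?_⟩
              rcases hc'' with rfl | rfl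
              · exact Relation.ReflTransGen.refl
              · exact Relation.ReflTransGen.single hadj
            · refine ⟨ep2 h.choose, hw, ?_⟩
              rcases hc'' with rfl | rfl
              · exact Relation.ReflTransGen.single
                  (⟨h.choose.1.2, Or.inr ⟨(by
                    have : (ep1 h.choose, h.choose.1.2) = h.choose.1 := rfl
                    rw [this, ext, dif_pos h.choose.2]
                    convert hb), rfl⟩⟩)
              · exact Relation.ReflTransGen.refl
          rcases Finset.mem_insert.mp hc' with heq | hc2
          · obtain ⟨c, hcC, hp0⟩ := hstep c' (Or.inl heq)
            exact ⟨v, hv, c, hcC, hp0.trans hpath⟩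
          · rcases Finset.mem_insert.mp hc2 with heq | hc3
            · obtain ⟨c, hcC, hp0⟩ := hstep c' (Or.inr heq)
              exact ⟨v, hv, c, hcC, hp0.trans hpath⟩
            · exact ⟨v, hv, c', hc3, hpath⟩
    · rw [dif_neg h] at hg
      simp at hg

/-- adjacency using only open edges from `U` -/
def adjU {d n : ℕ} (U : Finset (EdgeT d n)) (χ : EdgeT d n → Bool) (v w : Fin d → ℤ) : Prop :=
  ∃ g ∈ U, χ g = true ∧ ((v = ep1 g ∧ w = ep2 g) ∨ (w = ep1 g ∧ v = ep2 g))

lemma adjU_mono {d n : ℕ} {U U' : Finset (EdgeT d n)} (hUU : U ⊆ U') (χ : EdgeT d n → Bool)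
    {v w : Fin d → ℤ} (h : adjU U χ v w) : adjU U' χ v w := by
  obtain ⟨g, hgU, h1, h2⟩ := h
  exact ⟨g, hUU hgU, h1, h2⟩

lemma adjU_erase_closed {d n : ℕ} {U : Finset (EdgeT d n)} {χ : EdgeT d n → Bool}
    {e : EdgeT d n} (he : χ e = false) {v w : Fin d → ℤ} (h : adjU U χ v w) :
    adjU (U.erase e) χ v w := by
  obtain ⟨g, hgU, h1, h2⟩ := h
  refine ⟨g, Finset.mem_erase.mpr ⟨?_, hgU⟩, h1, h2⟩
  rintro rfl
  rw [he] at h1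
  exact absurd h1 (by simp)

lemma cluster_erase_open {d n : ℕ} {U : Finset (EdgeT d n)} {χ : EdgeT d n → Bool}
    {e : EdgeT d n} {C : Finset (Fin d → ℤ)} {c v : Fin d → ℤ}
    (hpath : Relation.ReflTransGen (adjU U χ) c v) (hcC : c ∈ C) :
    ∃ c' ∈ insert (ep1 e) (insert (ep2 e) C),
      Relation.ReflTransGen (adjU (U.erase e) χ) c' v := by
  induction hpath with
  | refl => exact ⟨c, Finset.mem_insert_of_mem (Finset.mem_insert_of_mem hcC), Relation.ReflTransGen.refl⟩
  | @tail w w' hp hstep ih =>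
    obtain ⟨g, hgU, hopen, hor⟩ := hstep
    rcases eq_or_ne g e with rfl | hne
    · refine ⟨w', ?_, Relation.ReflTransGen.refl⟩
      rcases hor with ⟨_, rfl⟩ | ⟨rfl, _⟩
      · exact Finset.mem_insert_of_mem (Finset.mem_insert_self _ _)
      · exact Finset.mem_insert_self _ _
    · obtain ⟨c', hc', hp'⟩ := ih
      exact ⟨c', hc', hp'.tail ⟨g, Finset.mem_erase.mpr ⟨hne, hgU⟩, hopen, hor⟩⟩

/-- every `U`-edge touching the explored cluster is revealed -/
lemma explore_cluster_rev (d n : ℕ) (U : Finset (EdgeT d n)) (C : Finset (Fin d → ℤ))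
    (χ : EdgeT d n → Bool) (g : EdgeT d n) (hgU : g ∈ U) (v : Fin d → ℤ)
    (hv : v = ep1 g ∨ v = ep2 g) (hreach : ∃ c ∈ C, Relation.ReflTransGen (adjU U χ) c v) :
    g ∈ (explore d n U C).Rev χ := by
  induction U using Finset.strongInduction generalizing C with
  | _ U ih =>
    obtain ⟨c, hcC, hpath⟩ := hreach
    rw [explore]
    by_cases h : (U.filter (fun g => touches C g)).Nonempty
    · rw [dif_pos h]
      have hgU' : h.choose ∈ U := Finset.mem_of_mem_filter _ h.choose_spec
      have hsub := Finset.erase_ssubset hgU'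
      rw [DT.Rev_node, Finset.mem_insert]
      rcases eq_or_ne g h.choose with rfl | hne
      · exact Or.inl rfl
      · right
        have hgU2 : g ∈ U.erase h.choose := Finset.mem_erase.mpr ⟨hne, hgU⟩
        cases hb : χ h.choose with
        | false =>
          simp only [Bool.false_eq_true, if_false]
          have hpath' : Relation.ReflTransGen (adjU (U.erase h.choose) χ) c v :=
            Relation.ReflTransGen.mono (fun a b hab => adjU_erase_closed hb hab) _ _ hpath
          exact ih _ hsub _ hgU2 ⟨c, hcC, hpath'⟩
        | true =>
          simp only [if_true]
          obtain ⟨c', hc', hpath'⟩ := cluster_erase_open (e := h.choose) hpath hcC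
          exact ih _ hsub _ hgU2 ⟨c', hc', hpath'⟩
    · exfalso
      rcases Relation.ReflTransGen.cases_head hpath with heq | ⟨w, hstep, _⟩
      · -- v = c ∈ C, so g touches C
        apply h
        refine ⟨g, Finset.mem_filter.mpr ⟨hgU, ?_⟩⟩
        rcases hv with rfl | rfl
        · exact Or.inl (heq ▸ hcC)
        · exact Or.inr (heq ▸ hcC)
      · obtain ⟨g', hg'U, _, hor⟩ := hstep
        apply h
        refine ⟨g', Finset.mem_filter.mpr ⟨hg'U, ?_⟩⟩
        rcases hor with ⟨rfl, _⟩ | ⟨_, rfl⟩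
        · exact Or.inl hcC
        · exact Or.inr hcC

/-! ## Determinacy of the one-arm event -/

lemma adj_to_adjU {d n : ℕ} {χ : EdgeT d n → Bool} {v w : Fin d → ℤ}
    (h : adj d (ext d n χ) v w) : adjU (Finset.univ : Finset (EdgeT d n)) χ v w := by
  obtain ⟨i, ⟨hopen, rfl⟩ | ⟨hopen, rfl⟩⟩ := h
  · rw [ext] at hopen
    by_cases hm : (v, i) ∈ boxEdges d n
    · rw [dif_pos hm] at hopen
      exact ⟨⟨(v, i), hm⟩, Finset.mem_univ _, hopen, Or.inl ⟨rfl, rfl⟩⟩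
    · rw [dif_neg hm] at hopen; exact absurd hopen (by simp)
  · rw [ext] at hopen
    by_cases hm : (w, i) ∈ boxEdges d n
    · rw [dif_pos hm] at hopen
      exact ⟨⟨(w, i), hm⟩, Finset.mem_univ _, hopen, Or.inr ⟨rfl, rfl⟩⟩
    · rw [dif_neg hm] at hopen; exact absurd hopen (by simp)

lemma adjU_to_adj {d n : ℕ} {U : Finset (EdgeT d n)} {χ : EdgeT d n → Bool} {v w : Fin d → ℤ}
    (h : adjU U χ v w) : adj d (ext d n χ) v w := by
  obtain ⟨g, _, hopen, hor⟩ := h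
  have hext : ext d n χ (ep1 g, g.1.2) = true := by
    have : (ep1 g, g.1.2) = g.1 := rfl
    rw [this, ext, dif_pos g.2]
    convert hopen
  rcases hor with ⟨rfl, rfl⟩ | ⟨rfl, rfl⟩
  · exact ⟨g.1.2, Or.inl ⟨hext, rfl⟩⟩
  · exact ⟨g.1.2, Or.inr ⟨hext, rfl⟩⟩

lemma adj_symm {d : ℕ} (ω : ((Fin d → ℤ) × Fin d) → Bool) :
    Symmetric (adj d ω) := by
  rintro v w ⟨i, h | h⟩
  · exact ⟨i, Or.inr h⟩
  · exact ⟨i, Or.inl h⟩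

lemma nrm_zero {d : ℕ} : nrm (0 : Fin d → ℤ) = 0 := by
  rw [← Nat.le_zero, nrm_le_iff]
  intro i
  simp

lemma adj_nrm_le {d n : ℕ} (ω : ((Fin d → ℤ) × Fin d) → Bool) {v w : Fin d → ℤ}
    (h : adj d ω v w) : nrm w ≤ nrm v + 1 := by
  have := (adj_nrm_step (n' := n) ω h 0).1
  rwa [sub_zero, sub_zero] at this

/-- transfer of connectivity to a configuration agreeing on the revealed edges -/
lemma conn_transfer {d n k : ℕ} (χ χ' : EdgeT d n → Bool)
    (hag : ∀ g ∈ (explore d n Finset.univ (bdryBox d k)).Rev χ, χ' g = χ g)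
    {b : Fin d → ℤ} (hbC : b ∈ bdryBox d k)
    (hb0 : Relation.ReflTransGen (adj d (ext d n χ)) 0 b)
    {y : Fin d → ℤ} (hp : Relation.ReflTransGen (adj d (ext d n χ)) 0 y) :
    Relation.ReflTransGen (adj d (ext d n χ')) 0 y := by
  induction hp with
  | refl => exact Relation.ReflTransGen.refl
  | @tail w y' h' hstep ih =>
    -- w is reachable from the seed b
    have hbw : Relation.ReflTransGen (adj d (ext d n χ)) b w :=
      (Std.Symm.symm (self := @Relation.ReflTransGen.symmetric _ _ ⟨fun a b h => adj_symm _ h⟩) _ _ hb0).trans h'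
    have hbwU : Relation.ReflTransGen (adjU (Finset.univ : Finset (EdgeT d n)) χ) b w :=
      Relation.ReflTransGen.mono (fun _ _ hab => adj_to_adjU hab) _ _ hbw
    obtain ⟨g, _, hopen, hor⟩ := adj_to_adjU hstep
    have hv : w = ep1 g ∨ w = ep2 g := by
      rcases hor with ⟨h1, _⟩ | ⟨_, h2⟩
      · exact Or.inl h1
      · exact Or.inr h2
    have hrev : g ∈ (explore d n Finset.univ (bdryBox d k)).Rev χ :=
      explore_cluster_rev d n Finset.univ (bdryBox d k) χ g (Finset.mem_univ g) w hv
        ⟨b, hbC, hbwU⟩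
    have hopen' : χ' g = true := by rw [hag g hrev]; exact hopen
    have hstep' : adj d (ext d n χ') w y' :=
      adjU_to_adj ⟨g, Finset.mem_univ g, hopen', hor⟩
    exact ih.tail hstep'

lemma oneArm_transfer {d n k : ℕ} (hd : 1 ≤ d) (hk : k ≤ n) (χ χ' : EdgeT d n → Bool)
    (hag : ∀ g ∈ (explore d n Finset.univ (bdryBox d k)).Rev χ, χ' g = χ g)
    (h : ∃ y ∈ bdryBox d n, conn d (ext d n χ) 0 y) :
    ∃ y ∈ bdryBox d n, conn d (ext d n χ') 0 y := by
  obtain ⟨y, hy, hp⟩ := h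
  have hpr : Relation.ReflTransGen (adj d (ext d n χ)) 0 y := hp
  have hny : nrm y = n := (mem_bdry_iff hd).mp hy
  -- find a point of the path on the sphere of radius k
  obtain ⟨b, hnb, hb0⟩ := rtg_ivt (adj d (ext d n χ)) nrm
    (fun v w hvw => adj_nrm_le (n := n) _ hvw) hpr k (by rw [nrm_zero]; omega) (by omega)
  have hbC : b ∈ bdryBox d k := (mem_bdry_iff hd).mpr hnb
  exact ⟨y, hy, conn_transfer χ χ' hag hbC hb0 hpr⟩

lemma oneArm_det {d n k : ℕ} (hd : 1 ≤ d) (hk : k ≤ n) (χ χ' : EdgeT d n → Bool)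
    (hag : ∀ g ∈ (explore d n Finset.univ (bdryBox d k)).Rev χ, χ' g = χ g) :
    oneArmInd d n n χ' = oneArmInd d n n χ := by
  have hag' : ∀ g ∈ (explore d n Finset.univ (bdryBox d k)).Rev χ', χ g = χ' g := by
    intro g hg
    rw [DT.Rev_agree _ χ χ' hag] at hg
    exact (hag g hg).symm
  by_cases hc : ∃ y ∈ bdryBox d n, conn d (ext d n χ) 0 y
  · simp only [oneArmInd]
    rw [if_pos hc, if_pos (oneArm_transfer hd hk χ χ' hag hc)]
  · simp only [oneArmInd]
    rw [if_neg hc, if_neg (fun hc' => hc (oneArm_transfer hd hk χ' χ hag' hc'))]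

/-! ## Translation argument -/

lemma mem_boxEdges_iff {d n : ℕ} {x : Fin d → ℤ} {i : Fin d} :
    (x, i) ∈ boxEdges d n ↔ x ∈ box d n ∧ x + unit d i ∈ box d n := by
  rw [boxEdges, Finset.mem_filter, Finset.mem_product]
  simp only [Finset.mem_univ, and_true]

lemma box_mono {d m m' : ℕ} (h : m ≤ m') : box d m ⊆ box d m' := by
  intro x hx
  rw [mem_box_iff_nrm] at hx ⊢
  omega

lemma ep_mem_box {d n : ℕ} (g : EdgeT d n) : ep1 g ∈ box d n ∧ ep2 g ∈ box d n := by
  have h := g.2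
  have : (g.1.1, g.1.2) = g.1 := rfl
  rw [← this, mem_boxEdges_iff] at h
  exact h

def Ppred {d : ℕ} (n : ℕ) (z : Fin d → ℤ) (J : ℕ) (g : EdgeT d n) : Prop :=
  (g.1.1 ∈ box d J ∧ g.1.1 + unit d g.1.2 ∈ box d J) ∧ (g.1.1 + z, g.1.2) ∈ boxEdges d n

def Qpred {d : ℕ} (n : ℕ) (z : Fin d → ℤ) (J : ℕ) (g : EdgeT d n) : Prop :=
  g.1.1 - z ∈ box d J ∧ g.1.1 + unit d g.1.2 - z ∈ box d J

noncomputable def transEquiv {d n : ℕ} (z : Fin d → ℤ) (J : ℕ) (hJ : J ≤ n) :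
    {g : EdgeT d n // Ppred n z J g} ≃ {g : EdgeT d n // Qpred n z J g} where
  toFun g := ⟨⟨(g.1.1.1 + z, g.1.1.2), g.2.2⟩, by
    constructor
    · show g.1.1.1 + z - z ∈ box d J
      have : g.1.1.1 + z - z = g.1.1.1 := by abel
      rw [this]; exact g.2.1.1
    · show g.1.1.1 + z + unit d g.1.1.2 - z ∈ box d J
      have : g.1.1.1 + z + unit d g.1.1.2 - z = g.1.1.1 + unit d g.1.1.2 := by abel
      rw [this]; exact g.2.1.2⟩
  invFun g := ⟨⟨(g.1.1.1 - z, g.1.1.2), by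
      rw [mem_boxEdges_iff]
      constructor
      · exact box_mono hJ g.2.1
      · have : g.1.1.1 - z + unit d g.1.1.2 = g.1.1.1 + unit d g.1.1.2 - z := by abel
        rw [this]; exact box_mono hJ g.2.2⟩, by
    refine ⟨⟨g.2.1, ?_⟩, ?_⟩
    · show g.1.1.1 - z + unit d g.1.1.2 ∈ box d J
      have : g.1.1.1 - z + unit d g.1.1.2 = g.1.1.1 + unit d g.1.1.2 - z := by abel
      rw [this]; exact g.2.2
    · show (g.1.1.1 - z + z, g.1.1.2) ∈ boxEdges d n
      have : g.1.1.1 - z + z = g.1.1.1 := by abel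
      rw [this]
      have h2 : (g.1.1.1, g.1.1.2) = g.1.1 := rfl
      rw [h2]; exact g.1.2⟩
  left_inv g := by
    apply Subtype.ext
    apply Subtype.ext
    show (g.1.1.1 + z - z, g.1.1.2) = g.1.1
    have : g.1.1.1 + z - z = g.1.1.1 := by abel
    rw [this]
  right_inv g := by
    apply Subtype.ext
    apply Subtype.ext
    show (g.1.1.1 - z + z, g.1.1.2) = g.1.1
    have : g.1.1.1 - z + z = g.1.1.1 := by abel
    rw [this]

noncomputable def transPerm {d n : ℕ} (z : Fin d → ℤ) (J : ℕ) (hJ : J ≤ n) :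
    Equiv.Perm (EdgeT d n) :=
  (transEquiv z J hJ).extendSubtype

lemma transPerm_apply {d n : ℕ} (z : Fin d → ℤ) (J : ℕ) (hJ : J ≤ n)
    {g : EdgeT d n} (hQ : Qpred n z J g) :
    transPerm z J hJ ((transEquiv z J hJ).symm ⟨g, hQ⟩).1 = g := by
  rw [transPerm]
  rw [Equiv.extendSubtype_apply_of_mem _ _ ((transEquiv z J hJ).symm ⟨g, hQ⟩).2]
  have : (⟨((transEquiv z J hJ).symm ⟨g, hQ⟩).1, ((transEquiv z J hJ).symm ⟨g, hQ⟩).2⟩ :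
      {g : EdgeT d n // Ppred n z J g}) = (transEquiv z J hJ).symm ⟨g, hQ⟩ := rfl
  rw [this, Equiv.apply_symm_apply]

lemma nrm_sub_comm {d : ℕ} (x y : Fin d → ℤ) : nrm (x - y) = nrm (y - x) := by
  rw [nrm, nrm]
  congr 1
  funext i
  have : (x - y) i = -((y - x) i) := by simp
  rw [this, Int.natAbs_neg]

lemma translate_path {d n : ℕ} (z : Fin d → ℤ) (J : ℕ) (hJ : J ≤ n)
    (χ : EdgeT d n → Bool) {v : Fin d → ℤ}
    (h : Relation.ReflTransGen
      (fun x y => adj d (ext d n χ) x y ∧ nrm (x - z) ≤ J ∧ nrm (y - z) ≤ J) z v) :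
    Relation.ReflTransGen (adj d (ext d n (fun g => χ (transPerm z J hJ g)))) 0 (v - z) := by
  induction h with
  | refl =>
    have : z - z = (0 : Fin d → ℤ) := by abel
    rw [this]
  | @tail x y hxy hstep ih =>
    obtain ⟨hadj, hx, hy⟩ := hstep
    obtain ⟨g, _, hopen, hor⟩ := adj_to_adjU hadj
    have hQ : Qpred n z J g := by
      constructor
      · rw [mem_box_iff_nrm]
        show nrm (ep1 g - z) ≤ J
        rcases hor with ⟨h1, _⟩ | ⟨h1, _⟩
        · rw [← h1]; exact hx
        · rw [← h1]; exact hy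
      · rw [mem_box_iff_nrm]
        show nrm (ep2 g - z) ≤ J
        rcases hor with ⟨_, h2⟩ | ⟨_, h2⟩
        · rw [← h2]; exact hy
        · rw [← h2]; exact hx
    set f := ((transEquiv z J hJ).symm ⟨g, hQ⟩).1 with hf
    have hπ : transPerm z J hJ f = g := transPerm_apply z J hJ hQ
    have hopen' : (fun g' => χ (transPerm z J hJ g')) f = true := by
      show χ (transPerm z J hJ f) = true
      rw [hπ]; exact hopen
    have hep1 : ep1 f = ep1 g - z := rfl
    have hep2 : ep2 f = ep2 g - z := by
      show ep1 g - z + unit d g.1.2 = ep1 g + unit d g.1.2 - z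
      abel
    have hstep' : adj d (ext d n (fun g' => χ (transPerm z J hJ g'))) (x - z) (y - z) := by
      apply adjU_to_adj (U := Finset.univ)
      refine ⟨f, Finset.mem_univ f, hopen', ?_⟩
      rcases hor with ⟨h1, h2⟩ | ⟨h1, h2⟩
      · left
        constructor
        · rw [hep1, h1]
        · rw [hep2, h2]
      · right
        constructor
        · rw [hep1, h1]
        · rw [hep2, h2]
    exact ih.tail hstep'

/-! ## Assembly -/

lemma oneArmInd_vals {d n k : ℕ} (χ : EdgeT d n → Bool) :
    oneArmInd d n k χ = 0 ∨ oneArmInd d n k χ = 1 := by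
  rw [oneArmInd]; split
  · exact Or.inr rfl
  · exact Or.inl rfl

lemma oneArmInd_nonneg {d n k : ℕ} (χ : EdgeT d n → Bool) : 0 ≤ oneArmInd d n k χ := by
  rcases oneArmInd_vals χ with h | h <;> rw [h] <;> norm_num

lemma oneArmInd_le_one {d n k : ℕ} (χ : EdgeT d n → Bool) : oneArmInd d n k χ ≤ 1 := by
  rcases oneArmInd_vals χ with h | h <;> rw [h] <;> norm_num

lemma ext_mono {d n : ℕ} {σ σ' : EdgeT d n → Bool} (h : ∀ g, σ g = true → σ' g = true) :
    ∀ r, ext d n σ r = true → ext d n σ' r = true := by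
  intro r hr
  rw [ext] at hr ⊢
  by_cases hm : r ∈ boxEdges d n
  · rw [dif_pos hm] at hr ⊢; exact h _ hr
  · rw [dif_neg hm] at hr; exact absurd hr (by simp)

lemma conn_mono {d n : ℕ} {σ σ' : EdgeT d n → Bool} (h : ∀ g, σ g = true → σ' g = true)
    {v w : Fin d → ℤ} (hc : conn d (ext d n σ) v w) : conn d (ext d n σ') v w := by
  apply Relation.ReflTransGen.mono (fun a b hab => ?_) _ _ hc
  obtain ⟨i, ⟨ho, he⟩ | ⟨ho, he⟩⟩ := hab
  · exact ⟨i, Or.inl ⟨ext_mono h _ ho, he⟩⟩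
  · exact ⟨i, Or.inr ⟨ext_mono h _ ho, he⟩⟩

lemma oneArm_mono {d n k : ℕ} (e : EdgeT d n) (χ : EdgeT d n → Bool) :
    oneArmInd d n k (Function.update χ e false) ≤ oneArmInd d n k (Function.update χ e true) := by
  have h : ∀ g, Function.update χ e false g = true → Function.update χ e true g = true := by
    intro g hg
    rcases eq_or_ne g e with rfl | hne
    · simp
    · rwa [Function.update_of_ne hne] at hg ⊢
  by_cases hc : ∃ y ∈ bdryBox d k, conn d (ext d n (Function.update χ e false)) 0 y
  · have hc' : ∃ y ∈ bdryBox d k, conn d (ext d n (Function.update χ e true)) 0 y := by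
      obtain ⟨y, hy, hcy⟩ := hc
      exact ⟨y, hy, conn_mono h hcy⟩
    simp only [oneArmInd]
    rw [if_pos hc, if_pos hc']
  · simp only [oneArmInd]
    rw [if_neg hc]
    split <;> norm_num

lemma bw_eq_W {d n : ℕ} (p : ℝ) (σ : EdgeT d n → Bool) : bw d n p σ = W p σ := by
  rw [bw, W]
  rw [← Finset.prod_filter_mul_prod_filter_not Finset.univ (fun g => σ g = true)
    (fun g => w1 p (σ g))]
  congr 1
  · rw [Finset.prod_congr rfl (fun g hg => ?_), Finset.prod_const]
    rw [(Finset.mem_filter.mp hg).2]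
    rfl
  · rw [show (Finset.univ.filter fun g : EdgeT d n => ¬ σ g = true)
        = Finset.univ.filter fun g : EdgeT d n => σ g = false from by
      apply Finset.filter_congr; intro g _; simp]
    rw [Finset.prod_congr rfl (fun g hg => ?_), Finset.prod_const]
    rw [(Finset.mem_filter.mp hg).2]
    rfl

lemma Ep_eq_E1 {d n : ℕ} (p : ℝ) (g : (EdgeT d n → Bool) → ℝ) : Ep d n p g = E1 p g := by
  rw [Ep, E1]
  exact Finset.sum_congr rfl fun σ _ => by rw [bw_eq_W]

lemma theta_eq {d n k : ℕ} (p : ℝ) : theta d n k p = E1 p (oneArmInd d n k) := Ep_eq_E1 p _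

lemma theta_nonneg {d n k : ℕ} {p : ℝ} (h0 : 0 ≤ p) (h1 : p ≤ 1) : 0 ≤ theta d n k p := by
  rw [theta_eq]
  exact E1_nonneg h0 h1 fun χ => oneArmInd_nonneg χ

lemma theta_anti {d n : ℕ} (hd : 1 ≤ d) {p : ℝ} (h0 : 0 ≤ p) (h1 : p ≤ 1)
    {j k : ℕ} (hjk : j ≤ k) : theta d n k p ≤ theta d n j p := by
  rw [theta_eq, theta_eq]
  apply E1_mono h0 h1
  intro χ
  rw [oneArmInd, oneArmInd]
  by_cases hc : ∃ y ∈ bdryBox d k, conn d (ext d n χ) 0 y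
  · rw [if_pos hc]
    obtain ⟨y, hy, hcy⟩ := hc
    have hny : nrm y = k := (mem_bdry_iff hd).mp hy
    obtain ⟨v, hv, hpath⟩ := rtg_ivt (adj d (ext d n χ)) nrm
      (fun a b hab => adj_nrm_le (n := n) _ hab) hcy j (by rw [nrm_zero]; omega) (by omega)
    rw [if_pos ⟨v, (mem_bdry_iff hd).mpr hv, hpath⟩]
  · rw [if_neg hc]
    split <;> norm_num

lemma theta_zero {d n : ℕ} (hd : 1 ≤ d) (p : ℝ) : theta d n 0 p = 1 := by
  rw [theta_eq]
  have : ∀ χ : EdgeT d n → Bool, oneArmInd d n 0 χ = 1 := by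
    intro χ
    rw [oneArmInd, if_pos ⟨0, (mem_bdry_iff hd).mpr nrm_zero, Relation.ReflTransGen.refl⟩]
  rw [E1_congr p this, E1_const]

lemma conn_seed_bound {d n : ℕ} (hd : 1 ≤ d) (hn : 1 ≤ n) {p : ℝ} (h0 : 0 ≤ p) (h1 : p ≤ 1)
    (k : ℕ) (z : Fin d → ℤ) :
    E1 p (fun χ : EdgeT d n → Bool =>
        if ∃ c ∈ bdryBox d k, Relation.ReflTransGen (adj d (ext d n χ)) c z then (1:ℝ) else 0)
      ≤ theta d n (min ((k:ℤ) - (nrm z : ℤ)).natAbs (n-1)) p := by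
  set J := min ((k:ℤ) - (nrm z : ℤ)).natAbs (n-1) with hJdef
  have hJ : J ≤ n := by omega
  rw [theta_eq, ← E1_perm p (transPerm z J hJ) (oneArmInd d n J)]
  apply E1_mono h0 h1
  intro χ
  by_cases hc : ∃ c ∈ bdryBox d k, Relation.ReflTransGen (adj d (ext d n χ)) c z
  · rw [if_pos hc]
    obtain ⟨c, hcB, hcz⟩ := hc
    have hzc : Relation.ReflTransGen (adj d (ext d n χ)) z c :=
      Std.Symm.symm (self := @Relation.ReflTransGen.symmetric _ _ ⟨fun a b h => adj_symm _ h⟩) _ _ hcz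
    have hkc : nrm c = k := (mem_bdry_iff hd).mp hcB
    have htri1 : nrm c ≤ nrm z + nrm (c - z) := nrm_diff_ge c z
    have htri2 : nrm z ≤ nrm c + nrm (c - z) := by
      have := nrm_diff_ge z c
      rwa [nrm_sub_comm z c] at this
    have hJc : J ≤ nrm (c - z) := by omega
    have h0z : nrm (z - z) ≤ J := by
      rw [show z - z = (0 : Fin d → ℤ) from by abel, nrm_zero]
      omega
    obtain ⟨v, hv, hpath⟩ := rtg_first_exit (adj d (ext d n χ)) (fun v => nrm (v - z))
      (fun a b hab => (adj_nrm_step (n' := n) _ hab z).1) J hzc h0z hJc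
    have hev : ∃ y ∈ bdryBox d J,
        conn d (ext d n (fun g => χ (transPerm z J hJ g))) 0 y :=
      ⟨v - z, (mem_bdry_iff hd).mpr hv, translate_path z J hJ χ hpath⟩
    rw [oneArmInd, if_pos hev]
  · rw [if_neg hc]
    exact oneArmInd_nonneg _

set_option maxHeartbeats 1000000 in
lemma sum_theta_min {d n : ℕ} (hd : 1 ≤ d) (hn : 1 ≤ n) {p : ℝ} (h0 : 0 ≤ p) (h1 : p ≤ 1)
    (r : ℕ) (hr : r ≤ n) :
    ∑ k ∈ Finset.range n, theta d n (min ((k:ℤ) - (r : ℤ)).natAbs (n-1)) p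
      ≤ 2 * ∑ j ∈ Finset.range n, theta d n j p := by
  have hφ : ∀ k ∈ Finset.range n,
      theta d n (min ((k:ℤ) - (r : ℤ)).natAbs (n-1)) p
        ≤ theta d n (if r ≤ k then k - r else r - k - 1) p := by
    intro k hk
    rw [Finset.mem_range] at hk
    apply theta_anti hd h0 h1
    split <;> omega
  have hsplit := Finset.sum_filter_add_sum_filter_not (Finset.range n)
    (fun k => r ≤ k) (fun k => theta d n (if r ≤ k then k - r else r - k - 1) p)
  have hbound : ∀ (s : Finset ℕ) (φ : ℕ → ℕ), (∀ k ∈ s, φ k < n) →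
      (∀ k ∈ s, ∀ k' ∈ s, φ k = φ k' → k = k') →
      ∑ k ∈ s, theta d n (φ k) p ≤ ∑ j ∈ Finset.range n, theta d n j p := by
    intro s φ hlt hinj
    calc ∑ k ∈ s, theta d n (φ k) p
        = ∑ j ∈ s.image φ, theta d n j p := (Finset.sum_image (f := fun j => theta d n j p) (g := φ) hinj).symm
      _ ≤ ∑ j ∈ Finset.range n, theta d n j p := by
          apply Finset.sum_le_sum_of_subset_of_nonneg
          · intro j hj
            rw [Finset.mem_image] at hj
            obtain ⟨k, hk, rfl⟩ := hj
            rw [Finset.mem_range]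
            exact hlt k hk
          · intro j _ _
            exact theta_nonneg h0 h1
  have h1b : ∑ k ∈ (Finset.range n).filter (fun k => r ≤ k),
      theta d n (if r ≤ k then k - r else r - k - 1) p
        ≤ ∑ j ∈ Finset.range n, theta d n j p := by
    have := hbound ((Finset.range n).filter (fun k => r ≤ k)) (fun k => k - r)
      (fun k hk => by
        simp only [Finset.mem_filter, Finset.mem_range] at hk
        exact (by omega : k - r < n))
      (fun k hk k' hk' h => by
        simp only [Finset.mem_filter, Finset.mem_range] at hk hk'
        have h2 : k - r = k' - r := h
        omega)
    refine le_trans (le_of_eq (Finset.sum_congr rfl fun k hk => ?_)) this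
    simp only [Finset.mem_filter] at hk
    rw [if_pos hk.2]
  have h2b : ∑ k ∈ (Finset.range n).filter (fun k => ¬ r ≤ k),
      theta d n (if r ≤ k then k - r else r - k - 1) p
        ≤ ∑ j ∈ Finset.range n, theta d n j p := by
    have := hbound ((Finset.range n).filter (fun k => ¬ r ≤ k)) (fun k => r - k - 1)
      (fun k hk => by
        simp only [Finset.mem_filter, Finset.mem_range] at hk
        exact (by omega : r - k - 1 < n))
      (fun k hk k' hk' h => by
        simp only [Finset.mem_filter, Finset.mem_range] at hk hk'
        have h2 : r - k - 1 = r - k' - 1 := h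
        omega)
    refine le_trans (le_of_eq (Finset.sum_congr rfl fun k hk => ?_)) this
    simp only [Finset.mem_filter] at hk
    rw [if_neg hk.2]
  calc ∑ k ∈ Finset.range n, theta d n (min ((k:ℤ) - (r : ℤ)).natAbs (n-1)) p
      ≤ ∑ k ∈ Finset.range n, theta d n (if r ≤ k then k - r else r - k - 1) p :=
        Finset.sum_le_sum hφ
    _ ≤ 2 * ∑ j ∈ Finset.range n, theta d n j p := by
        rw [← hsplit]; linarith

lemma revp_bound {d n : ℕ} (hd : 1 ≤ d) (hn : 1 ≤ n) {p : ℝ} (h0 : 0 ≤ p) (h1 : p ≤ 1)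
    (e : EdgeT d n) (k : ℕ) :
    revp p e (explore d n Finset.univ (bdryBox d k))
      ≤ theta d n (min ((k:ℤ) - (nrm (ep1 e) : ℤ)).natAbs (n-1)) p
        + theta d n (min ((k:ℤ) - (nrm (ep2 e) : ℤ)).natAbs (n-1)) p := by
  have hpt : ∀ χ : EdgeT d n → Bool,
      (if e ∈ (explore d n Finset.univ (bdryBox d k)).Rev χ then (1:ℝ) else 0)
        ≤ (if ∃ c ∈ bdryBox d k, Relation.ReflTransGen (adj d (ext d n χ)) c (ep1 e) then (1:ℝ) else 0)
          + (if ∃ c ∈ bdryBox d k, Relation.ReflTransGen (adj d (ext d n χ)) c (ep2 e) then (1:ℝ) else 0) := by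
    intro χ
    by_cases hrev : e ∈ (explore d n Finset.univ (bdryBox d k)).Rev χ
    · rw [if_pos hrev]
      obtain ⟨v, hv, c, hcB, hpath⟩ := explore_rev_conn d n Finset.univ (bdryBox d k) χ e hrev
      rcases hv with rfl | rfl
      · rw [if_pos ⟨c, hcB, hpath⟩]
        have : (0:ℝ) ≤ (if ∃ c ∈ bdryBox d k, Relation.ReflTransGen (adj d (ext d n χ)) c (ep2 e) then (1:ℝ) else 0) := by
          split <;> norm_num
        linarith
      · have h2 : (if ∃ c ∈ bdryBox d k, Relation.ReflTransGen (adj d (ext d n χ)) c (ep2 e) then (1:ℝ) else 0) = 1 :=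
          if_pos ⟨c, hcB, hpath⟩
        have ha : (0:ℝ) ≤ (if ∃ c ∈ bdryBox d k, Relation.ReflTransGen (adj d (ext d n χ)) c (ep1 e) then (1:ℝ) else 0) := by
          split <;> norm_num
        rw [h2]; linarith
    · rw [if_neg hrev]
      have ha : (0:ℝ) ≤ (if ∃ c ∈ bdryBox d k, Relation.ReflTransGen (adj d (ext d n χ)) c (ep1 e) then (1:ℝ) else 0) := by
        split <;> norm_num
      have hb : (0:ℝ) ≤ (if ∃ c ∈ bdryBox d k, Relation.ReflTransGen (adj d (ext d n χ)) c (ep2 e) then (1:ℝ) else 0) := by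
        split <;> norm_num
      linarith
  calc revp p e (explore d n Finset.univ (bdryBox d k))
      ≤ E1 p (fun χ =>
          (if ∃ c ∈ bdryBox d k, Relation.ReflTransGen (adj d (ext d n χ)) c (ep1 e) then (1:ℝ) else 0)
          + (if ∃ c ∈ bdryBox d k, Relation.ReflTransGen (adj d (ext d n χ)) c (ep2 e) then (1:ℝ) else 0)) :=
        E1_mono h0 h1 hpt
    _ = E1 p (fun χ => if ∃ c ∈ bdryBox d k, Relation.ReflTransGen (adj d (ext d n χ)) c (ep1 e) then (1:ℝ) else 0)
        + E1 p (fun χ => if ∃ c ∈ bdryBox d k, Relation.ReflTransGen (adj d (ext d n χ)) c (ep2 e) then (1:ℝ) else 0) :=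
        E1_add p _ _
    _ ≤ _ := add_le_add (conn_seed_bound hd hn h0 h1 k (ep1 e)) (conn_seed_bound hd hn h0 h1 k (ep2 e))

/-- Covariance lower bound from exploration algorithms:
`∑_{e ∈ E_n} Cov_p(1_{0 ↔ ∂Λ_n}, ω_e) ≥ (n / (8 S_n)) θ_n(p) (1 - θ_n(p))`,
with `S_n = ∑_{k=0}^{n-1} θ_k(p)`. -/
theorem cov_lower_bound (d n : ℕ) (hd : 1 ≤ d) (hn : 1 ≤ n) (p : ℝ)
    (hp : p ∈ Set.Ioo (0 : ℝ) 1) :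
    (n : ℝ) / (8 * ∑ k ∈ Finset.range n, theta d n k p) *
        (theta d n n p * (1 - theta d n n p))
      ≤ ∑ e : {e // e ∈ boxEdges d n},
          Cov d n p (oneArmInd d n n) (fun σ => if σ e then 1 else 0) := by
  have h0 : (0:ℝ) ≤ p := le_of_lt hp.1
  have h1 : p ≤ 1 := le_of_lt hp.2
  set S := ∑ k ∈ Finset.range n, theta d n k p with hS
  have hCov : ∀ e : EdgeT d n,
      Cov d n p (oneArmInd d n n) (fun σ => if σ e then 1 else 0) = CovA p e (oneArmInd d n n) := by
    intro e
    rw [Cov, CovA, Ep_eq_E1, Ep_eq_E1, Ep_eq_E1]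
  have hcovnn : ∀ e : EdgeT d n, 0 ≤ CovA p e (oneArmInd d n n) := by
    intro e
    rw [CovA_eq]
    apply mul_nonneg (mul_nonneg h0 (by linarith))
    rw [sub_nonneg]
    exact E1_mono h0 h1 (fun χ => oneArm_mono e χ)
  have hosss : ∀ k ∈ Finset.range n,
      theta d n n p * (1 - theta d n n p) ≤
        ∑ e : EdgeT d n, revp p e (explore d n Finset.univ (bdryBox d k))
          * CovA p e (oneArmInd d n n) := by
    intro k hk
    rw [Finset.mem_range] at hk
    have hres := osss_main h0 h1 (explore d n Finset.univ (bdryBox d k))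
      (explore_wf d n _ _) (oneArmInd d n n) (fun χ => oneArmInd_vals χ)
      (fun χ χ' hag => oneArm_det hd (by omega) χ χ' hag)
      (fun e χ => oneArm_mono e χ)
    rw [theta_eq]
    exact hres
  have hsumk : (n:ℝ) * (theta d n n p * (1 - theta d n n p)) ≤
      ∑ e : EdgeT d n,
        (∑ k ∈ Finset.range n, revp p e (explore d n Finset.univ (bdryBox d k)))
          * CovA p e (oneArmInd d n n) := by
    calc (n:ℝ) * (theta d n n p * (1 - theta d n n p))
        = ∑ _k ∈ Finset.range n, theta d n n p * (1 - theta d n n p) := by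
          rw [Finset.sum_const, Finset.card_range, nsmul_eq_mul]
      _ ≤ ∑ k ∈ Finset.range n, ∑ e : EdgeT d n,
            revp p e (explore d n Finset.univ (bdryBox d k)) * CovA p e (oneArmInd d n n) :=
          Finset.sum_le_sum hosss
      _ = ∑ e : EdgeT d n, ∑ k ∈ Finset.range n,
            revp p e (explore d n Finset.univ (bdryBox d k)) * CovA p e (oneArmInd d n n) :=
          Finset.sum_comm
      _ = ∑ e : EdgeT d n,
            (∑ k ∈ Finset.range n, revp p e (explore d n Finset.univ (bdryBox d k)))
              * CovA p e (oneArmInd d n n) := by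
          apply Finset.sum_congr rfl
          intro e _
          rw [Finset.sum_mul]
  have hrev4 : ∀ e : EdgeT d n,
      (∑ k ∈ Finset.range n, revp p e (explore d n Finset.univ (bdryBox d k))) ≤ 4 * S := by
    intro e
    have hb1 := ep_mem_box e
    have hr1 : nrm (ep1 e) ≤ n := mem_box_iff_nrm.mp hb1.1
    have hr2 : nrm (ep2 e) ≤ n := mem_box_iff_nrm.mp hb1.2
    calc ∑ k ∈ Finset.range n, revp p e (explore d n Finset.univ (bdryBox d k))
        ≤ ∑ k ∈ Finset.range n,
            (theta d n (min ((k:ℤ) - (nrm (ep1 e) : ℤ)).natAbs (n-1)) p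
              + theta d n (min ((k:ℤ) - (nrm (ep2 e) : ℤ)).natAbs (n-1)) p) :=
          Finset.sum_le_sum (fun k _ => revp_bound hd hn h0 h1 e k)
      _ = (∑ k ∈ Finset.range n, theta d n (min ((k:ℤ) - (nrm (ep1 e) : ℤ)).natAbs (n-1)) p)
          + ∑ k ∈ Finset.range n, theta d n (min ((k:ℤ) - (nrm (ep2 e) : ℤ)).natAbs (n-1)) p :=
          Finset.sum_add_distrib
      _ ≤ 2 * S + 2 * S :=
          add_le_add (sum_theta_min hd hn h0 h1 (nrm (ep1 e)) hr1)
            (sum_theta_min hd hn h0 h1 (nrm (ep2 e)) hr2)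
      _ = 4 * S := by ring
  have hmain : (n:ℝ) * (theta d n n p * (1 - theta d n n p))
      ≤ 4 * S * ∑ e : EdgeT d n, CovA p e (oneArmInd d n n) := by
    calc (n:ℝ) * (theta d n n p * (1 - theta d n n p))
        ≤ ∑ e : EdgeT d n,
            (∑ k ∈ Finset.range n, revp p e (explore d n Finset.univ (bdryBox d k)))
              * CovA p e (oneArmInd d n n) := hsumk
      _ ≤ ∑ e : EdgeT d n, 4 * S * CovA p e (oneArmInd d n n) :=
          Finset.sum_le_sum (fun e _ => mul_le_mul_of_nonneg_right (hrev4 e) (hcovnn e))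
      _ = 4 * S * ∑ e : EdgeT d n, CovA p e (oneArmInd d n n) := by
          rw [← Finset.mul_sum]
  have hS1 : (1:ℝ) ≤ S := by
    rw [hS]
    calc (1:ℝ) = theta d n 0 p := (theta_zero hd p).symm
      _ ≤ ∑ k ∈ Finset.range n, theta d n k p :=
          Finset.single_le_sum (f := fun k => theta d n k p)
            (fun k _ => theta_nonneg h0 h1) (Finset.mem_range.mpr hn)
  have hCsum : 0 ≤ ∑ e : EdgeT d n, CovA p e (oneArmInd d n n) :=
    Finset.sum_nonneg (fun e _ => hcovnn e)
  rw [show (∑ e : {e // e ∈ boxEdges d n},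
      Cov d n p (oneArmInd d n n) (fun σ => if σ e then 1 else 0))
      = ∑ e : EdgeT d n, CovA p e (oneArmInd d n n) from
    Finset.sum_congr rfl (fun e _ => hCov e)]
  have h8 : (0:ℝ) < 8 * S := by linarith
  rw [div_mul_eq_mul_div, div_le_iff₀ h8]
  have hfin : 4 * S * (∑ e : EdgeT d n, CovA p e (oneArmInd d n n))
      ≤ (∑ e : EdgeT d n, CovA p e (oneArmInd d n n)) * (8 * S) := by
    nlinarith [mul_nonneg (by linarith : (0:ℝ) ≤ S) hCsum]
  linarith

end Stmt17
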